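/- (One-step auxiliary MHE, N = 1.) Suppose the matrices P (symmetric positive definite), L̄_xx (symmetric), L_xw = L_wxᵀ, L_ww (symmetric positive definite), L_xθ, L_wθ, X̂₀ satisfy: S := L_xw·L_ww⁻¹·L_wx - L̄_xx, T := L_xw·L_ww⁻¹·L_wθ - L_xθ, and I - P⁻¹·S is invertible with C := (I - P⁻¹·S)⁻¹·P⁻¹. If (X, W) satisfies the KKT conditions (P + L̄_xx)·X - P·X̂₀ + L_xθ + L_xw·W = 0 and L_wx·X + L_ww·W + L_wθ = 0 (i.e., with zero dual variable), then X = (I + C·S)·(P⁻¹·T + X̂₀). -/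
import Mathlib


open Matrix

theorem stmt_8 (n m p : ℕ)
    (P Lbarxx : Matrix (Fin n) (Fin n) ℝ) (hP : P.PosDef) (hLbarxx : Lbarxx.IsSymm)
    (Lww : Matrix (Fin m) (Fin m) ℝ) (hLww : Lww.PosDef)
    (Lwx : Matrix (Fin m) (Fin n) ℝ) (Lxw : Matrix (Fin n) (Fin m) ℝ) (hLxw : Lxw = Lwxᵀ)
    (Lxθ : Matrix (Fin n) (Fin p) ℝ) (Lwθ : Matrix (Fin m) (Fin p) ℝ)
    (Xhat0 : Matrix (Fin n) (Fin p) ℝ)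
    (S : Matrix (Fin n) (Fin n) ℝ) (hS : S = Lxw * Lww⁻¹ * Lwx - Lbarxx)
    (T : Matrix (Fin n) (Fin p) ℝ) (hT : T = Lxw * Lww⁻¹ * Lwθ - Lxθ)
    (hinv : IsUnit (1 - P⁻¹ * S))
    (C : Matrix (Fin n) (Fin n) ℝ) (hC : C = (1 - P⁻¹ * S)⁻¹ * P⁻¹)
    (X : Matrix (Fin n) (Fin p) ℝ) (W : Matrix (Fin m) (Fin p) ℝ)
    (hkkt1 : (P + Lbarxx) * X - P * Xhat0 + Lxθ + Lxw * W = 0)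
    (hkkt2 : Lwx * X + Lww * W + Lwθ = 0) :
    X = (1 + C * S) * (P⁻¹ * T + Xhat0) := by
  set A : Matrix (Fin n) (Fin n) ℝ := 1 - P⁻¹ * S with hA
  have hPdet : IsUnit P.det := isUnit_iff_ne_zero.mpr hP.det_pos.ne'
  have hPinv : P⁻¹ * P = 1 := Matrix.nonsing_inv_mul P hPdet
  have hAdet : IsUnit A.det := (Matrix.isUnit_iff_isUnit_det A).mp hinv
  have hAinv : A⁻¹ * A = 1 := Matrix.nonsing_inv_mul A hAdet
  have hLdet : IsUnit Lww.det := isUnit_iff_ne_zero.mpr hLww.det_pos.ne'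
  have hLinv : Lww⁻¹ * Lww = 1 := Matrix.nonsing_inv_mul Lww hLdet
  -- solve for W
  have hW : W = -(Lww⁻¹ * (Lwx * X + Lwθ)) := by
    have h1 : Lww * W = -(Lwx * X + Lwθ) := by
      have := hkkt2
      linear_combination (norm := noncomm_ring) this
    calc W = Lww⁻¹ * (Lww * W) := by rw [← Matrix.mul_assoc, hLinv, Matrix.one_mul]
    _ = -(Lww⁻¹ * (Lwx * X + Lwθ)) := by rw [h1, Matrix.mul_neg]
  -- (P - S) X = T + P Xhat0
  have h2 : (P - S) * X = T + P * Xhat0 := by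
    subst hS hT hW
    simp only [Matrix.mul_add, Matrix.mul_neg, Matrix.neg_mul, Matrix.sub_mul,
      Matrix.add_mul, Matrix.mul_assoc] at hkkt1 ⊢
    linear_combination (norm := noncomm_ring) hkkt1
  -- A X = P⁻¹ T + Xhat0
  have h3 : A * X = P⁻¹ * T + Xhat0 := by
    have hPA : P - S = P * A := by
      rw [hA, Matrix.mul_sub, Matrix.mul_one, ← Matrix.mul_assoc,
        Matrix.mul_nonsing_inv P hPdet, Matrix.one_mul]
    calc A * X = P⁻¹ * ((P - S) * X) := by
          rw [hPA, Matrix.mul_assoc, ← Matrix.mul_assoc P⁻¹, hPinv, Matrix.one_mul]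
    _ = P⁻¹ * T + Xhat0 := by
          rw [h2, Matrix.mul_add, ← Matrix.mul_assoc, hPinv, Matrix.one_mul]
  -- 1 + C S = A⁻¹
  have h4 : 1 + C * S = A⁻¹ := by
    rw [hC]
    calc 1 + A⁻¹ * P⁻¹ * S = A⁻¹ * A + A⁻¹ * (P⁻¹ * S) := by
          rw [hAinv, Matrix.mul_assoc]
    _ = A⁻¹ * (A + P⁻¹ * S) := by rw [Matrix.mul_add]
    _ = A⁻¹ := by rw [hA]; simp
  rw [h4, ← h3, ← Matrix.mul_assoc, hAinv, Matrix.one_mul]
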